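/- For the Poisson kernels P_r(t) = (1 − r²)/(1 − 2r cos t + r²) on 𝕋 (normalized so that (1/2π)∫_𝕋 P_r = 1) and any continuous λ: [0,1] → ℝ with λ(1) = 0 and lim_{r→1} λ(r)/(1−r) = ∞, one has lim_{δ→0} liminf_{r→1} (1/2π)∫_{-δλ(r)}^{δλ(r)} P_r(t) dt = 1, i.e., β = 1. -/

import Mathlib

open Real MeasureTheory Filter Topology Set intervalIntegral

/-- The Poisson kernel. -/
noncomputable def poissonKer (r t : ℝ) : ℝ :=
  (1 - r ^ 2) / (1 - 2 * r * Real.cos t + r ^ 2)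

lemma poisson_denom_pos {r : ℝ} (hr0 : 0 < r) (hr1 : r < 1) (t : ℝ) :
    0 < 1 - 2 * r * Real.cos t + r ^ 2 := by
  nlinarith [Real.cos_le_one t, Real.neg_one_le_cos t, sq_nonneg (1 - r)]

lemma poisson_continuous {r : ℝ} (hr0 : 0 < r) (hr1 : r < 1) :
    Continuous (fun t => poissonKer r t) := by
  apply Continuous.div (by continuity) (by continuity)
  exact fun t => (poisson_denom_pos hr0 hr1 t).ne'

lemma poisson_antideriv {r : ℝ} (hr0 : 0 < r) (hr1 : r < 1) {x : ℝ}
    (hx : -π < x) (hx' : x < π) :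
    HasDerivAt (fun y => 2 * Real.arctan ((1 + r) / (1 - r) * Real.tan (y / 2)))
      (poissonKer r x) x := by
  have hc : 0 < Real.cos (x / 2) := Real.cos_pos_of_mem_Ioo ⟨by linarith, by linarith⟩
  set c : ℝ := (1 + r) / (1 - r) with hcdef
  have h1 : HasDerivAt (fun y : ℝ => y / 2) (1 / 2) x := by
    simpa using (hasDerivAt_id x).div_const 2
  have h2 : HasDerivAt Real.tan (1 / Real.cos (x / 2) ^ 2) (x / 2) :=
    Real.hasDerivAt_tan hc.ne'
  have h3 : HasDerivAt (fun y : ℝ => Real.tan (y / 2)) (1 / Real.cos (x / 2) ^ 2 * (1 / 2)) x :=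
    by have := h2.comp x h1; exact this
  have h4 : HasDerivAt (fun y : ℝ => c * Real.tan (y / 2))
      (c * (1 / Real.cos (x / 2) ^ 2 * (1 / 2))) x := h3.const_mul c
  have h5 : HasDerivAt Real.arctan (1 / (1 + (c * Real.tan (x / 2)) ^ 2))
      (c * Real.tan (x / 2)) := Real.hasDerivAt_arctan _
  have h6 := ((h5.comp x h4).const_mul (2 : ℝ))
  refine h6.congr_deriv (Eq.symm ?_)
  have h1r : (0:ℝ) < 1 - r := by linarith
  have hden := poisson_denom_pos hr0 hr1 x
  have hcos : Real.cos x = 2 * Real.cos (x / 2) ^ 2 - 1 := by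
    have := Real.cos_sq (x / 2)
    have h2x : 2 * (x / 2) = x := by ring
    rw [h2x] at this
    linarith
  have hsin : Real.sin (x / 2) ^ 2 = 1 - Real.cos (x / 2) ^ 2 := by
    nlinarith [Real.sin_sq_add_cos_sq (x / 2)]
  rw [hcdef, poissonKer, Real.tan_eq_sin_div_cos, hcos]
  have hD := hden
  rw [hcos] at hD
  have hD' : (1 - 2 * r * (2 * Real.cos (x / 2) ^ 2 - 1) + r ^ 2) ≠ 0 := hD.ne'
  have hc' := hc.ne'
  have h1r' := h1r.ne'
  field_simp
  rw [div_eq_iff (by convert hD' using 2; ring)]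
  linear_combination ((1-r^2)*(1+r)^2) * hsin

lemma poisson_integral {r a : ℝ} (hr0 : 0 < r) (hr1 : r < 1) (ha0 : 0 ≤ a) (haπ : a < π) :
    ∫ t in (-a)..a, poissonKer r t
      = 4 * Real.arctan ((1 + r) / (1 - r) * Real.tan (a / 2)) := by
  have key : ∫ t in (-a)..a, poissonKer r t
      = 2 * Real.arctan ((1 + r) / (1 - r) * Real.tan (a / 2))
        - 2 * Real.arctan ((1 + r) / (1 - r) * Real.tan ((-a) / 2)) := by
    apply intervalIntegral.integral_eq_sub_of_hasDerivAt
    · intro x hx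
      rw [uIcc_of_le (by linarith)] at hx
      exact poisson_antideriv hr0 hr1 (by cases hx; linarith) (by cases hx; linarith)
    · exact (poisson_continuous hr0 hr1).intervalIntegrable _ _
  rw [key, show (-a) / 2 = -(a / 2) by ring, Real.tan_neg, mul_neg, Real.arctan_neg]
  ring

theorem littlewood_stmt13 (lam : ℝ → ℝ) (hlam : ContinuousOn lam (Icc 0 1))
    (hlam1 : lam 1 = 0)
    (htan : Tendsto (fun r => lam r / (1 - r)) (𝓝[<] (1 : ℝ)) atTop) :
    Tendsto (fun δ : ℝ =>
        liminf (fun r : ℝ =>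
            (1 / (2 * π)) * ∫ t in (-(δ * lam r))..(δ * lam r), poissonKer r t)
          (𝓝[<] (1 : ℝ)))
      (𝓝[>] (0 : ℝ)) (𝓝 1) := by
  have h01 : ∀ᶠ r in 𝓝[<] (1:ℝ), r ∈ Ioo (0:ℝ) 1 :=
    Ioo_mem_nhdsLT (by norm_num)
  -- lam tends to 0 from the left at 1
  have hlam0 : Tendsto lam (𝓝[<] (1:ℝ)) (𝓝 0) := by
    have hcw : ContinuousWithinAt lam (Icc 0 1) 1 :=
      hlam.continuousWithinAt (by norm_num)
    have : Tendsto lam (𝓝[Icc (0:ℝ) 1] 1) (𝓝 0) := by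
      have hcw' : Tendsto lam (𝓝[Icc (0:ℝ) 1] 1) (𝓝 (lam 1)) := hcw
      rwa [hlam1] at hcw'
    refine this.mono_left ?_
    rw [← nhdsWithin_Ioo_eq_nhdsLT (show (0:ℝ) < 1 by norm_num)]
    exact nhdsWithin_mono _ Ioo_subset_Icc_self
  have hpos : ∀ᶠ r in 𝓝[<] (1:ℝ), 0 < lam r := by
    filter_upwards [htan.eventually_ge_atTop 1, h01] with r h1 h2
    have h1r : (0:ℝ) < 1 - r := by linarith [h2.2]
    nlinarith [(le_div_iff₀ h1r).mp h1]
  -- main claim: for each δ > 0, the liminf is 1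
  have main : ∀ δ : ℝ, 0 < δ →
      liminf (fun r : ℝ =>
          (1 / (2 * π)) * ∫ t in (-(δ * lam r))..(δ * lam r), poissonKer r t)
        (𝓝[<] (1 : ℝ)) = 1 := by
    intro δ hδ
    apply Filter.Tendsto.liminf_eq
    have hsmall : ∀ᶠ r in 𝓝[<] (1:ℝ), δ * lam r < π := by
      have : ∀ᶠ r in 𝓝[<] (1:ℝ), lam r < π / δ :=
        hlam0.eventually (eventually_lt_nhds (by positivity))
      filter_upwards [this] with r h
      calc δ * lam r < δ * (π / δ) := by exact (mul_lt_mul_iff_right₀ hδ).mpr h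
      _ = π := by field_simp
    -- the integral formula eventually holds
    have hev : ∀ᶠ r in 𝓝[<] (1:ℝ),
        (2 / π) * Real.arctan ((1 + r) / (1 - r) * Real.tan (δ * lam r / 2))
          = (1 / (2 * π)) * ∫ t in (-(δ * lam r))..(δ * lam r), poissonKer r t := by
      filter_upwards [h01, hpos, hsmall] with r hr hp hs
      rw [poisson_integral hr.1 hr.2 (le_of_lt (mul_pos hδ hp)) hs]
      have hπ : (π:ℝ) ≠ 0 := Real.pi_ne_zero
      field_simp
      ring
    refine Tendsto.congr' hev ?_
    -- show the arctan expression tends to 1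
    have hg : Tendsto (fun r => (1 + r) / (1 - r) * Real.tan (δ * lam r / 2))
        (𝓝[<] (1:ℝ)) atTop := by
      apply tendsto_atTop_mono' _ _ (Tendsto.const_mul_atTop (show (0:ℝ) < δ / 2 by positivity) htan)
      filter_upwards [h01, hpos, hsmall] with r hr hp hs
      have h1r : (0:ℝ) < 1 - r := by linarith [hr.2]
      have hx0 : 0 < δ * lam r / 2 := by positivity
      have hx1 : δ * lam r / 2 < π / 2 := by linarith
      have hT := Real.lt_tan hx0 hx1
      have hT' : 0 < Real.tan (δ * lam r / 2) := lt_trans hx0 hT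
      have e1 : δ / 2 * (lam r / (1 - r)) = (δ * lam r / 2) * (1 / (1 - r)) := by ring
      have e2 : (1 + r) / (1 - r) * Real.tan (δ * lam r / 2)
          = ((1 + r) * Real.tan (δ * lam r / 2)) * (1 / (1 - r)) := by ring
      rw [e1, e2]
      apply mul_le_mul_of_nonneg_right _ (by positivity)
      nlinarith [hr.1]
    have harc : Tendsto (fun r => Real.arctan ((1 + r) / (1 - r) * Real.tan (δ * lam r / 2)))
        (𝓝[<] (1:ℝ)) (𝓝 (π / 2)) :=
      (tendsto_nhds_of_tendsto_nhdsWithin Real.tendsto_arctan_atTop).comp hg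
    have := harc.const_mul (2 / π)
    have hval : (2 / π) * (π / 2) = 1 := by
      field_simp
    rwa [hval] at this
  have hev' : (fun _ : ℝ => (1:ℝ)) =ᶠ[𝓝[>] (0:ℝ)]
      (fun δ : ℝ => liminf (fun r : ℝ =>
          (1 / (2 * π)) * ∫ t in (-(δ * lam r))..(δ * lam r), poissonKer r t)
        (𝓝[<] (1 : ℝ))) := by
    filter_upwards [self_mem_nhdsWithin] with δ hδ
    exact (main δ hδ).symm
  exact Tendsto.congr' hev' tendsto_const_nhds
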